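/- Let A be a non-Lie (left) Leibniz algebra over an algebraically closed field of characteristic zero with dim(A) ≤ 4. Then A is solvable. -/

import Mathlib

/-- Span of all brackets `[u, v]` with `u ∈ p`, `v ∈ q`. -/
def bracketSpan {K A : Type*} [Field K] [AddCommGroup A] [Module K A]
    (br : A →ₗ[K] A →ₗ[K] A) (p q : Submodule K A) : Submodule K A :=
  Submodule.span K {x | ∃ a ∈ p, ∃ b ∈ q, br a b = x}

/-- Derived series: `derSeries br 0 = A` and
`derSeries br (n+1) = [derSeries br n, derSeries br n]`; so `derSeries br n = A^(n+1)`.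
The algebra is solvable iff some term vanishes. -/
def derSeries {K A : Type*} [Field K] [AddCommGroup A] [Module K A]
    (br : A →ₗ[K] A →ₗ[K] A) : ℕ → Submodule K A
  | 0 => ⊤
  | n + 1 => bracketSpan br (derSeries br n) (derSeries br n)

/-- Lower central series: `lcs br 0 = A` and `lcs br (n+1) = [A, lcs br n]`;
so `lcs br n = A^(n+1)`.  The algebra is nilpotent iff some term vanishes. -/
def lcs {K A : Type*} [Field K] [AddCommGroup A] [Module K A]
    (br : A →ₗ[K] A →ₗ[K] A) : ℕ → Submodule K A
  | 0 => ⊤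
  | n + 1 => bracketSpan br ⊤ (lcs br n)

section Aux
variable {K A : Type*} [Field K] [AddCommGroup A] [Module K A]

lemma mem_bracketSpan' (br : A →ₗ[K] A →ₗ[K] A) {p q : Submodule K A} {a b : A}
    (ha : a ∈ p) (hb : b ∈ q) : br a b ∈ bracketSpan br p q :=
  Submodule.subset_span ⟨a, ha, b, hb, rfl⟩

lemma bracketSpan_le' (br : A →ₗ[K] A →ₗ[K] A) {p q r : Submodule K A}
    (h : ∀ a ∈ p, ∀ b ∈ q, br a b ∈ r) : bracketSpan br p q ≤ r := by
  rw [bracketSpan, Submodule.span_le]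
  rintro x ⟨a, ha, b, hb, rfl⟩
  exact h a ha b hb

/-- span by ≤ 2 vectors -/
lemma exists_le_span_pair_aux {V : Type*} [AddCommGroup V] [Module K V]
    {p : Submodule K V} {n : ℕ} (b : Module.Basis (Fin n) K p) (hn : n ≤ 2) :
    ∃ x y : V, p ≤ Submodule.span K {x, y} := by
  have hspan : p ≤ Submodule.span K (Set.range fun i : Fin n => ((b i : p) : V)) := by
    intro v hv
    have : (⟨v, hv⟩ : p) ∈ Submodule.span K (Set.range b) := by
      rw [b.span_eq]; trivial
    have h2 := Submodule.map_mono (f := p.subtype) (le_of_eq b.span_eq.symm) (Submodule.mem_map_of_mem (by trivial : (⟨v, hv⟩ : p) ∈ ⊤))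
    rw [Submodule.map_span] at h2
    convert h2 using 2
    ext w
    simp [Set.range_comp]
    rfl
  interval_cases n
  · exact ⟨0, 0, hspan.trans (by
      rw [Set.range_eq_empty]
      simp [Submodule.span_empty]  )⟩
  · refine ⟨(b 0 : p), 0, hspan.trans (Submodule.span_mono ?_)⟩
    rintro w ⟨i, rfl⟩
    fin_cases i <;> simp
  · refine ⟨(b 0 : p), (b 1 : p), hspan.trans (Submodule.span_mono ?_)⟩
    rintro w ⟨i, rfl⟩
    fin_cases i <;> simp

lemma exists_le_span_pair {V : Type*} [AddCommGroup V] [Module K V]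
    (p : Submodule K V) [FiniteDimensional K V] (h : Module.finrank K p ≤ 2) :
    ∃ x y : V, p ≤ Submodule.span K {x, y} :=
  exists_le_span_pair_aux (Module.finBasis K p) h

end Aux

set_option maxHeartbeats 1600000 in
/-- a non-Lie (left) Leibniz algebra of dimension at most `4` over an
algebraically closed field of characteristic zero is solvable. -/
theorem nonlie_leibniz_dim_le_four_solvable
    {K A : Type*} [Field K] [IsAlgClosed K] [CharZero K]
    [AddCommGroup A] [Module K A] [FiniteDimensional K A]
    (br : A →ₗ[K] A →ₗ[K] A)
    (leibniz : ∀ a b c : A, br a (br b c) = br (br a b) c + br b (br a c))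
    (hnonlie : ∃ a : A, br a a ≠ 0)
    (hdim : Module.finrank K A ≤ 4) :
    ∃ m : ℕ, derSeries br m = ⊥ := by
  classical
  by_contra hc
  push_neg at hc
  -- the Leibniz kernel
  set I : Submodule K A := Submodule.span K {x | ∃ a : A, br a a = x} with hIdef
  have hgen : ∀ a : A, br a a ∈ I := fun a => Submodule.subset_span ⟨a, rfl⟩
  have L1 : ∀ a b : A, br (br a a) b = 0 := by
    intro a b
    have h := (leibniz a a b).symm
    rwa [add_eq_right] at h
  have L2 : ∀ z ∈ I, ∀ b : A, br z b = 0 := by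
    intro z hz
    induction hz using Submodule.span_induction with
    | mem x hx => obtain ⟨a, rfl⟩ := hx; exact L1 a
    | zero => simp
    | add x y _ _ hx hy => intro b; rw [map_add, LinearMap.add_apply, hx b, hy b, add_zero]
    | smul t x _ hx => intro b; rw [map_smul, LinearMap.smul_apply, hx b, smul_zero]
  have Lσ : ∀ a b : A, br a b + br b a ∈ I := by
    intro a b
    have h : br a b + br b a = br (a+b) (a+b) - br a a - br b b := by
      simp only [map_add, LinearMap.add_apply]
      abel
    rw [h]
    exact Submodule.sub_mem _ (Submodule.sub_mem _ (hgen _) (hgen _)) (hgen _)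
  have L4 : ∀ (a : A), ∀ z ∈ I, br a z ∈ I := by
    intro a z hz
    induction hz using Submodule.span_induction with
    | mem x hx =>
        obtain ⟨b, rfl⟩ := hx
        rw [leibniz a b b]
        exact Lσ _ _
    | zero => simp
    | add x y _ _ hx hy => rw [map_add]; exact Submodule.add_mem _ hx hy
    | smul t x _ hx => rw [map_smul]; exact Submodule.smul_mem _ _ hx
  -- quotient
  set Q := A ⧸ I with hQdef
  set π : A →ₗ[K] Q := I.mkQ with hπdef
  have hπsurj : Function.Surjective π := Submodule.mkQ_surjective I
  have hπ0 : ∀ z ∈ I, π z = 0 := fun z hz => (Submodule.Quotient.mk_eq_zero I).2 hz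
  -- induced bracket
  have hker1 : ∀ a : A, I ≤ LinearMap.ker (π ∘ₗ br a) := by
    intro a z hz
    simp only [LinearMap.mem_ker, LinearMap.comp_apply]
    exact hπ0 _ (L4 a z hz)
  have hGdef : ∀ a : A, ∀ b : A, (I.liftQ (π ∘ₗ br a) (hker1 a)) (π b) = π (br a b) :=
    fun a b => Submodule.liftQ_apply I _ b
  set Gb : A →ₗ[K] Q →ₗ[K] Q :=
    { toFun := fun a => I.liftQ (π ∘ₗ br a) (hker1 a)
      map_add' := by
        intro a b
        apply LinearMap.ext
        intro x
        obtain ⟨c, rfl⟩ := hπsurj x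
        show (I.liftQ (π ∘ₗ br (a+b)) (hker1 (a+b))) (π c)
            = (I.liftQ (π ∘ₗ br a) (hker1 a)) (π c) + (I.liftQ (π ∘ₗ br b) (hker1 b)) (π c)
        rw [hGdef, hGdef, hGdef]
        simp [map_add]
      map_smul' := by
        intro t a
        apply LinearMap.ext
        intro x
        obtain ⟨c, rfl⟩ := hπsurj x
        show (I.liftQ (π ∘ₗ br (t • a)) (hker1 (t • a))) (π c)
            = t • (I.liftQ (π ∘ₗ br a) (hker1 a)) (π c)
        rw [hGdef, hGdef]
        simp [map_smul] } with hGbdef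
  have hkerG : I ≤ LinearMap.ker Gb := by
    intro z hz
    simp only [LinearMap.mem_ker]
    apply LinearMap.ext
    intro x
    obtain ⟨c, rfl⟩ := hπsurj x
    show (I.liftQ (π ∘ₗ br z) (hker1 z)) (π c) = 0
    rw [hGdef, L2 z hz c, map_zero]
  set brQ : Q →ₗ[K] Q →ₗ[K] Q := I.liftQ Gb hkerG with hbrQdef
  have hbrQ : ∀ a b : A, brQ (π a) (π b) = π (br a b) := by
    intro a b
    show (I.liftQ Gb hkerG) (π a) (π b) = π (br a b)
    have h1 : (I.liftQ Gb hkerG) (π a) = Gb a := Submodule.liftQ_apply I Gb a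
    rw [h1]
    exact hGdef a b
  have brQ_leibniz : ∀ x y z : Q, brQ x (brQ y z) = brQ (brQ x y) z + brQ y (brQ x z) := by
    intro x y z
    obtain ⟨a, rfl⟩ := hπsurj x
    obtain ⟨b, rfl⟩ := hπsurj y
    obtain ⟨c, rfl⟩ := hπsurj z
    rw [hbrQ, hbrQ, hbrQ, hbrQ, hbrQ, hbrQ, ← map_add, leibniz]
  have brQ_alt : ∀ x : Q, brQ x x = 0 := by
    intro x
    obtain ⟨a, rfl⟩ := hπsurj x
    rw [hbrQ]
    exact hπ0 _ (hgen a)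
  have brQ_antisymm : ∀ x y : Q, brQ y x = - brQ x y := by
    intro x y
    have h := brQ_alt (x + y)
    simp only [map_add, LinearMap.add_apply, brQ_alt, zero_add, add_zero] at h
    exact eq_neg_of_add_eq_zero_left h
  -- transfer of derived series to the quotient
  have map_bs : ∀ p q : Submodule K A, Submodule.map π (bracketSpan br p q)
      = bracketSpan brQ (Submodule.map π p) (Submodule.map π q) := by
    intro p q
    rw [bracketSpan, bracketSpan, Submodule.map_span]
    congr 1
    ext y
    constructor
    · rintro ⟨x, ⟨a, ha, b, hb, rfl⟩, rfl⟩
      exact ⟨π a, ⟨a, ha, rfl⟩, π b, ⟨b, hb, rfl⟩, hbrQ a b⟩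
    · rintro ⟨x', ⟨a, ha, rfl⟩, y', ⟨b, hb, rfl⟩, rfl⟩
      exact ⟨br a b, ⟨a, ha, b, hb, rfl⟩, (hbrQ a b).symm⟩
  have map_der : ∀ n, Submodule.map π (derSeries br n) = derSeries brQ n := by
    intro n
    induction n with
    | zero =>
        show Submodule.map π ⊤ = ⊤
        rw [Submodule.map_top, LinearMap.range_eq_top]
        exact hπsurj
    | succ n ih =>
        show Submodule.map π (bracketSpan br (derSeries br n) (derSeries br n))
          = bracketSpan brQ (derSeries brQ n) (derSeries brQ n)
        rw [map_bs, ih]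
  -- Q is not solvable
  have hQns : ∀ m, derSeries brQ m ≠ ⊥ := by
    intro m hm
    apply hc (m+1)
    have hle : derSeries br m ≤ I := by
      intro x hx
      have hmem : π x ∈ derSeries brQ m := by
        rw [← map_der]
        exact Submodule.mem_map_of_mem hx
      rw [hm, Submodule.mem_bot] at hmem
      exact (Submodule.Quotient.mk_eq_zero I).1 hmem
    show bracketSpan br (derSeries br m) (derSeries br m) = ⊥
    refine le_bot_iff.1 (bracketSpan_le' br ?_)
    intro a ha b hb
    rw [L2 a (hle ha) b]
    exact Submodule.zero_mem ⊥
  -- dimension analysis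
  have hIne : I ≠ ⊥ := by
    obtain ⟨a, ha⟩ := hnonlie
    intro h
    apply ha
    have := hgen a
    rw [h, Submodule.mem_bot] at this
    exact this
  have hI1 : 1 ≤ Module.finrank K I := by
    rcases Nat.eq_zero_or_pos (Module.finrank K I) with h | h
    · exact absurd (Submodule.finrank_eq_zero.1 h) hIne
    · exact h
  have hQI : Module.finrank K Q + Module.finrank K I = Module.finrank K A :=
    Submodule.finrank_quotient_add_finrank I
  have hQ3 : Module.finrank K Q ≤ 3 := by omega
  have hd1 : 3 ≤ Module.finrank K (derSeries brQ 1) := by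
    by_contra h31
    push_neg at h31
    obtain ⟨x, y, hxy⟩ := exists_le_span_pair (derSeries brQ 1) (by omega)
    have h2 : derSeries brQ 2 ≤ Submodule.span K {brQ x y} := by
      refine bracketSpan_le' brQ ?_
      intro a ha b hb
      obtain ⟨s, t, rfl⟩ := Submodule.mem_span_pair.1 (hxy ha)
      obtain ⟨s', t', rfl⟩ := Submodule.mem_span_pair.1 (hxy hb)
      have hh : brQ (s • x + t • y) (s' • x + t' • y)
          = (s * t' - t * s') • brQ x y := by
        have hyx : brQ y x = - brQ x y := brQ_antisymm x y
        simp only [map_add, map_smul, LinearMap.add_apply, LinearMap.smul_apply,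
          brQ_alt, smul_zero, hyx, smul_smul, smul_neg, zero_add, add_zero, sub_smul]
        module
      rw [hh]
      exact Submodule.smul_mem _ _ (Submodule.mem_span_singleton_self _)
    have h3 : derSeries brQ 3 = ⊥ := by
      refine le_bot_iff.1 (bracketSpan_le' brQ ?_)
      intro a ha b hb
      obtain ⟨s, rfl⟩ := Submodule.mem_span_singleton.1 (h2 ha)
      obtain ⟨t, rfl⟩ := Submodule.mem_span_singleton.1 (h2 hb)
      simp [map_smul, brQ_alt]
    exact hQns 3 h3
  have hQeq : Module.finrank K Q = 3 :=
    le_antisymm hQ3 (le_trans hd1 (Submodule.finrank_le _))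
  have hd1top : derSeries brQ 1 = ⊤ := by
    apply Submodule.eq_top_of_finrank_eq
    refine le_antisymm (Submodule.finrank_le _) ?_
    rw [hQeq]
    exact hd1
  have hIfr : Module.finrank K I = 1 := by omega
  -- a generator of I
  obtain ⟨e, heI, he0⟩ := (Submodule.ne_bot_iff I).1 hIne
  have hIe : I = Submodule.span K {e} := by
    refine (Submodule.eq_of_le_of_finrank_le ?_ ?_).symm
    · rw [Submodule.span_le, Set.singleton_subset_iff]; exact heI
    · rw [hIfr, finrank_span_singleton he0]
  -- a coordinate functional for e
  obtain ⟨W, hW⟩ := Submodule.exists_isCompl (Submodule.span K {e})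
  set proj := (Submodule.span K {e}).linearProjOfIsCompl W hW with hprojdef
  set iso := LinearEquiv.toSpanNonzeroSingleton K A e he0 with hisodef
  set ℓ : A →ₗ[K] K := (iso.symm.toLinearMap) ∘ₗ proj with hldef
  have hℓ : ∀ z ∈ I, ℓ z • e = z := by
    intro z hz
    rw [hIe] at hz
    have h1 : proj z = ⟨z, hz⟩ := Submodule.linearProjOfIsCompl_apply_left hW ⟨z, hz⟩
    show (iso.symm (proj z)) • e = z
    rw [h1]
    have h2 := iso.apply_symm_apply ⟨z, hz⟩
    rw [LinearEquiv.toSpanNonzeroSingleton_apply] at h2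
    exact congrArg Subtype.val h2
  -- centrality of I
  have heImem : e ∈ I := heI
  have hbre : ∀ a : A, br a e ∈ I := fun a => L4 a e heImem
  set Λ : A →ₗ[K] K := ℓ ∘ₗ (br.flip e) with hΛdef
  have hΛ : ∀ a : A, br a e = Λ a • e := by
    intro a
    exact (hℓ _ (hbre a)).symm
  have hΛbr : ∀ a b : A, Λ (br a b) = 0 := by
    intro a b
    have h2 : Λ (br a b) • e = 0 := by
      have h := leibniz a b e
      rw [hΛ b, map_smul, hΛ a, hΛ (br a b), map_smul, hΛ b] at h
      rw [smul_comm (Λ b) (Λ a)] at h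
      rw [right_eq_add] at h
      exact h
    exact (smul_eq_zero.1 h2).resolve_right he0
  have hΛI : ∀ z ∈ I, Λ z = 0 := by
    intro z hz
    have h1 : br z e = 0 := L2 z hz e
    have h2 : Λ z • e = 0 := by rw [← hΛ z, h1]
    exact (smul_eq_zero.1 h2).resolve_right he0
  have hd1A : derSeries br 1 ⊔ I = ⊤ := by
    have h1 : Submodule.map π (derSeries br 1) = ⊤ := (map_der 1).trans hd1top
    have h2 := congrArg (Submodule.comap π) h1
    rw [Submodule.comap_map_eq, Submodule.comap_top, hπdef, Submodule.ker_mkQ] at h2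
    exact h2
  have hbreA : ∀ a : A, br a e = 0 := by
    intro a
    have hker : derSeries br 1 ⊔ I ≤ LinearMap.ker Λ := by
      apply sup_le
      · refine bracketSpan_le' br ?_
        intro a _ b _
        rw [LinearMap.mem_ker]
        exact hΛbr a b
      · intro z hz
        rw [LinearMap.mem_ker]
        exact hΛI z hz
    have hmem : a ∈ derSeries br 1 ⊔ I := by rw [hd1A]; trivial
    have : Λ a = 0 := hker hmem
    rw [hΛ a, this, zero_smul]
  have hcen : ∀ (a : A), ∀ z ∈ I, br a z = 0 := by
    intro a z hz
    rw [hIe] at hz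
    obtain ⟨t, rfl⟩ := Submodule.mem_span_singleton.1 hz
    rw [map_smul, hbreA, smul_zero]
  -- a linear section of π
  obtain ⟨u, hu⟩ := Module.projective_lifting_property π (LinearMap.id) hπsurj
  have huπ : ∀ x : Q, π (u x) = x := fun x => congrArg (fun f => f x) (congrArg DFunLike.coe hu)
  -- the scalar cocycle
  set Cb : Q →ₗ[K] Q →ₗ[K] A := br.compl₁₂ u u - brQ.compr₂ u with hCbdef
  have hCb : ∀ x y : Q, Cb x y = br (u x) (u y) - u (brQ x y) := by
    intro x y
    simp [hCbdef, LinearMap.compl₁₂_apply, LinearMap.compr₂_apply, LinearMap.sub_apply]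
  have hCbI : ∀ x y : Q, Cb x y ∈ I := by
    intro x y
    have h2 : π (br (u x) (u y)) = brQ x y := by
      rw [← hbrQ (u x) (u y), huπ, huπ]
    have h1 : π (Cb x y) = 0 := by
      rw [hCb, map_sub, huπ, h2, sub_self]
    exact (Submodule.Quotient.mk_eq_zero I).1 h1
  set cb : Q →ₗ[K] Q →ₗ[K] K := Cb.compr₂ ℓ with hcbdef
  have hcbCb : ∀ x y : Q, cb x y = ℓ (Cb x y) := by
    intro x y
    simp [hcbdef, LinearMap.compr₂_apply]
  have hcbe : ∀ x y : Q, cb x y • e = Cb x y := by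
    intro x y
    rw [hcbCb]
    exact hℓ _ (hCbI x y)
  -- the fundamental identity for cb
  have hD : ∀ x y z : Q, cb x (brQ y z) = cb (brQ x y) z + cb y (brQ x z) := by
    intro x y z
    have h1 : br (u x) (br (u y) (u z)) = br (u x) (u (brQ y z)) := by
      have hyz : br (u y) (u z) = u (brQ y z) + Cb y z := by rw [hCb]; abel
      rw [hyz, map_add, hcen (u x) _ (hCbI y z), add_zero]
    have h2 : br (br (u x) (u y)) (u z) = br (u (brQ x y)) (u z) := by
      have hxy : br (u x) (u y) = u (brQ x y) + Cb x y := by rw [hCb]; abel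
      rw [hxy, map_add, LinearMap.add_apply, L2 _ (hCbI x y) (u z), add_zero]
    have h3 : br (u y) (br (u x) (u z)) = br (u y) (u (brQ x z)) := by
      have hxz : br (u x) (u z) = u (brQ x z) + Cb x z := by rw [hCb]; abel
      rw [hxz, map_add, hcen (u y) _ (hCbI x z), add_zero]
    have hL := leibniz (u x) (u y) (u z)
    rw [h1, h2, h3] at hL
    have e1 : br (u x) (u (brQ y z)) = u (brQ x (brQ y z)) + Cb x (brQ y z) := by
      rw [hCb]; abel
    have e2 : br (u (brQ x y)) (u z) = u (brQ (brQ x y) z) + Cb (brQ x y) z := by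
      rw [hCb]; abel
    have e3 : br (u y) (u (brQ x z)) = u (brQ y (brQ x z)) + Cb y (brQ x z) := by
      rw [hCb]; abel
    rw [e1, e2, e3, brQ_leibniz x y z, map_add] at hL
    rw [hcbCb, hcbCb, hcbCb]
    have hL2 := congrArg ℓ hL
    simp only [map_add] at hL2
    linear_combination hL2
  -- symmetric and antisymmetric parts
  set sb : Q →ₗ[K] Q →ₗ[K] K := cb + cb.flip with hsbdef
  have hsb : ∀ x y : Q, sb x y = cb x y + cb y x := by
    intro x y
    simp [hsbdef, LinearMap.add_apply, LinearMap.flip_apply]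
  have hsymm : ∀ x y : Q, sb x y = sb y x := by
    intro x y; rw [hsb, hsb, add_comm]
  set βb : Q →ₗ[K] Q →ₗ[K] K := cb - cb.flip with hβbdef
  have hβb : ∀ x y : Q, βb x y = cb x y - cb y x := by
    intro x y
    simp [hβbdef, LinearMap.sub_apply, LinearMap.flip_apply]
  have hS1 : ∀ x y : Q, sb (brQ x y) y = 0 := by
    intro x y
    have h := hD x y y
    rw [brQ_alt, map_zero] at h
    rw [hsb]
    linear_combination -h
  have hS2 : ∀ x y z : Q, sb (brQ x y) z + sb (brQ x z) y = 0 := by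
    intro x y z
    have h := hS1 x (y + z)
    have hy := hS1 x y
    have hz := hS1 x z
    simp only [map_add, LinearMap.add_apply] at h
    linear_combination h - hy - hz
  have hT12 : ∀ x y z : Q, sb (brQ y x) z = - sb (brQ x y) z := by
    intro x y z
    rw [brQ_antisymm, map_neg, LinearMap.neg_apply]
  have hTcyc : ∀ x y z : Q, sb (brQ y z) x = sb (brQ x y) z := by
    intro x y z
    linear_combination hS2 y z x - hT12 x y z
  -- the sign identity for βb
  have hDβ : ∀ x y z : Q, βb x (brQ y z) - βb (brQ x y) z - βb y (brQ x z)
      = - sb (brQ x y) z := by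
    intro x y z
    have d1 := hD x y z
    have d2 := hD z x y
    have hzx : brQ z x = - brQ x z := brQ_antisymm x z
    have hzy : brQ z y = - brQ y z := brQ_antisymm y z
    rw [hzx, hzy, map_neg, map_neg, LinearMap.neg_apply] at d2
    -- d2 : cb z (brQ x y) = - cb (brQ x z) y - cb x (brQ y z) ... check
    have hcyc := hTcyc x y z
    rw [hsb, hsb] at hcyc
    simp only [hβb, hsb]
    linear_combination d1 + d2 - hcyc
  -- unimodularity: trace of left multiplication vanishes
  haveI : Module.Finite K Q := Module.Finite.quotient K I
  set trQ : Q →ₗ[K] K := (LinearMap.trace K Q) ∘ₗ brQ with htrQdef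
  have htr : ∀ x : Q, trQ x = 0 := by
    have hker : derSeries brQ 1 ≤ LinearMap.ker trQ := by
      refine bracketSpan_le' brQ ?_
      intro a _ b _
      rw [LinearMap.mem_ker]
      have hcomm : brQ (brQ a b) = brQ a * brQ b - brQ b * brQ a := by
        apply LinearMap.ext
        intro w
        have h := brQ_leibniz a b w
        simp only [LinearMap.sub_apply, Module.End.mul_apply]
        rw [h]
        abel
      show (LinearMap.trace K Q) (brQ (brQ a b)) = 0
      rw [hcomm, map_sub, LinearMap.trace_mul_comm, sub_self]
    intro x
    have hmem : x ∈ derSeries brQ 1 := by rw [hd1top]; trivial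
    exact hker hmem
  clear_value sb βb cb Cb brQ Gb
  -- a basis of Q and structure coefficients
  haveI : Module.Free K Q := Module.Free.of_divisionRing K Q
  obtain ⟨q⟩ : Nonempty (Module.Basis (Fin 3) K Q) := ⟨Module.finBasisOfFinrankEq K Q hQeq⟩
  have hrepr : ∀ i j : Fin 3, brQ (q i) (q j)
      = q.repr (brQ (q i) (q j)) 0 • q 0 + q.repr (brQ (q i) (q j)) 1 • q 1
        + q.repr (brQ (q i) (q j)) 2 • q 2 := by
    intro i j
    have h := q.sum_repr (brQ (q i) (q j))
    rw [Fin.sum_univ_three] at h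
    exact h.symm
  have htrq : ∀ j : Fin 3,
      q.repr (brQ (q j) (q 0)) 0 + q.repr (brQ (q j) (q 1)) 1
        + q.repr (brQ (q j) (q 2)) 2 = 0 := by
    intro j
    have h := htr (q j)
    rw [htrQdef, LinearMap.comp_apply, LinearMap.trace_eq_matrix_trace K q, Matrix.trace] at h
    simp only [Matrix.diag, LinearMap.toMatrix_apply, Fin.sum_univ_three] at h
    exact h
  have hr0 : ∀ (i k : Fin 3), q.repr (brQ (q i) (q i)) k = 0 := by
    intro i k
    rw [brQ_alt]
    simp
  have hranti : ∀ i j k : Fin 3, q.repr (brQ (q j) (q i)) k = - q.repr (brQ (q i) (q j)) k := by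
    intro i j k
    rw [brQ_antisymm (q i) (q j)]
    simp
  have hβ0 : ∀ x : Q, βb x x = 0 := by
    intro x; rw [hβb, sub_self]
  have hβanti : ∀ x y : Q, βb y x = - βb x y := by
    intro x y; rw [hβb, hβb]; ring
  -- trace relations in primed form
  have t0' : q.repr (brQ (q 0) (q 1)) 1 + q.repr (brQ (q 0) (q 2)) 2 = 0 := by
    have h := htrq 0
    rwa [hr0 0 0, zero_add] at h
  have t1' : - q.repr (brQ (q 0) (q 1)) 0 + q.repr (brQ (q 1) (q 2)) 2 = 0 := by
    have h := htrq 1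
    rwa [hr0 1 1, hranti 0 1 0, add_zero] at h
  have t2' : - q.repr (brQ (q 0) (q 2)) 0 - q.repr (brQ (q 1) (q 2)) 1 = 0 := by
    have h := htrq 2
    rw [hr0 2 2, hranti 0 2 0, hranti 1 2 1, add_zero] at h
    linear_combination h
  -- the key vanishing at the basis
  have hexp : βb (q 0) (brQ (q 1) (q 2)) - βb (brQ (q 0) (q 1)) (q 2)
      - βb (q 1) (brQ (q 0) (q 2)) = 0 := by
    rw [hrepr 1 2, hrepr 0 1, hrepr 0 2]
    simp only [map_add, map_smul, LinearMap.add_apply, LinearMap.smul_apply, smul_eq_mul]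
    rw [hβ0 (q 0), hβ0 (q 1), hβ0 (q 2), hβanti (q 0) (q 1)]
    linear_combination (- βb (q 0) (q 1)) * t2' + (βb (q 0) (q 2)) * t1'
      - (βb (q 1) (q 2)) * t0'
  have hτ : sb (brQ (q 0) (q 1)) (q 2) = 0 := by
    have h := hDβ (q 0) (q 1) (q 2)
    linear_combination h - hexp
  -- the trilinear form vanishes identically
  have hTxx : ∀ x z : Q, sb (brQ x x) z = 0 := by
    intro x z; rw [brQ_alt]; simp
  have hTxyx : ∀ x y : Q, sb (brQ x y) x = 0 := by
    intro x y
    have h := hS2 x y x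
    rw [brQ_alt] at h
    simpa using h
  have hT0 : ∀ i j k : Fin 3, sb (brQ (q i) (q j)) (q k) = 0 := by
    have h021 : sb (brQ (q 0) (q 2)) (q 1) = 0 := by
      linear_combination hS2 (q 0) (q 1) (q 2) - hτ
    have h120 : sb (brQ (q 1) (q 2)) (q 0) = 0 := by
      rw [hTcyc (q 0) (q 1) (q 2)]
      exact hτ
    have h201 : sb (brQ (q 2) (q 0)) (q 1) = 0 := by
      rw [hT12, h021, neg_zero]
    have h102 : sb (brQ (q 1) (q 0)) (q 2) = 0 := by
      rw [hT12, hτ, neg_zero]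
    have h210 : sb (brQ (q 2) (q 1)) (q 0) = 0 := by
      rw [hT12, h120, neg_zero]
    have hfin : ∀ i : Fin 3, i = 0 ∨ i = 1 ∨ i = 2 := by decide
    intro i j k
    rcases hfin i with rfl | rfl | rfl <;> rcases hfin j with rfl | rfl | rfl <;>
        rcases hfin k with rfl | rfl | rfl <;>
      first
        | exact hTxx _ _
        | exact hS1 _ _
        | exact hTxyx _ _
        | exact hτ
        | exact h021
        | exact h120
        | exact h201
        | exact h102
        | exact h210
  have hTball : ∀ a b c : Q, sb (brQ a b) c = 0 := by
    have hTb : (brQ.compr₂ sb) = 0 := by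
      refine q.ext fun i => q.ext fun j => q.ext fun k => ?_
      simp only [LinearMap.compr₂_apply, LinearMap.zero_apply]
      exact hT0 i j k
    intro a b c
    have h := DFunLike.congr_fun (DFunLike.congr_fun (DFunLike.congr_fun hTb a) b) c
    simpa [LinearMap.compr₂_apply] using h
  -- hence the symmetric part vanishes
  have hsb0 : ∀ x : Q, sb x x = 0 := by
    intro x
    have hker : derSeries brQ 1 ≤ LinearMap.ker (sb.flip x) := by
      refine bracketSpan_le' brQ ?_
      intro a _ b _
      rw [LinearMap.mem_ker, LinearMap.flip_apply]
      exact hTball a b x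
    have hmem : x ∈ derSeries brQ 1 := by rw [hd1top]; trivial
    have h := hker hmem
    rw [LinearMap.mem_ker, LinearMap.flip_apply] at h
    exact h
  -- contradiction with non-Lie
  obtain ⟨a, ha⟩ := hnonlie
  apply ha
  have hz : a - u (π a) ∈ I := by
    have h : π (a - u (π a)) = 0 := by rw [map_sub, huπ, sub_self]
    exact (Submodule.Quotient.mk_eq_zero I).1 h
  have h1 : br a a = br (u (π a)) (u (π a)) := by
    set x := u (π a) with hxdef
    have hA : a = x + (a - x) := by abel
    have expand : br a a = br x x + br x (a - x) + br (a - x) x + br (a - x) (a - x) := by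
      conv_lhs => rw [hA]
      simp only [map_add, LinearMap.add_apply]
      abel
    rw [expand, hcen x _ hz, L2 _ hz x, L2 _ hz (a - x), add_zero, add_zero, add_zero]
  have h2 : br (u (π a)) (u (π a)) = Cb (π a) (π a) := by
    rw [hCb, brQ_alt, map_zero, sub_zero]
  have h3 : cb (π a) (π a) = 0 := by
    have h := hsb0 (π a)
    rw [hsb] at h
    linear_combination h / 2
  rw [h1, h2, ← hcbe, h3, zero_smul]
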